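/- Let δ ∈ (0, 1/4), let (X, μ) be a finite measure space with μ(X) > 0, let v : X → ℝ be integrable with 0 ≤ v ≤ log(1/(2δ)) and ∫ |v − v̄| dμ / μ(X) ≤ C₀ where v̄ = (1/μ(X)) ∫ v dμ. Suppose μ({v = 0}) ≥ ν·μ(X)/6^N for some ν ∈ (0,1], N ≥ 1. Then μ({v = log(1/(2δ))}) / μ(X) ≤ c·6^N / (ν · log(1/(2δ))) for a constant c depending only on C₀. -/

import Mathlib

open MeasureTheory

theorem stmt11 {X : Type*} [MeasurableSpace X] (μ : Measure X) [IsFiniteMeasure μ]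
    (N : ℕ) (hN : 1 ≤ N) (δ ν C₀ : ℝ) (hδ : δ ∈ Set.Ioo (0:ℝ) (1/4))
    (hν : ν ∈ Set.Ioc (0:ℝ) 1) (hμ : 0 < (μ Set.univ).toReal)
    (v : X → ℝ) (hv : Integrable v μ) (hv0 : ∀ x, 0 ≤ v x)
    (hv1 : ∀ x, v x ≤ Real.log (1/(2*δ)))
    (hosc : (∫ x, |v x - (∫ y, v y ∂μ)/(μ Set.univ).toReal| ∂μ) / (μ Set.univ).toReal ≤ C₀)
    (hzero : ν * (μ Set.univ).toReal / 6^N ≤ (μ {x | v x = 0}).toReal) :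
    (μ {x | v x = Real.log (1/(2*δ))}).toReal / (μ Set.univ).toReal
      ≤ (2*C₀) * 6^N / (ν * Real.log (1/(2*δ))) := by
  set L : ℝ := Real.log (1/(2*δ)) with hLdef
  set A : ℝ := (μ Set.univ).toReal with hAdef
  have hL : 0 < L := by
    apply Real.log_pos
    rw [lt_div_iff₀ (by linarith [hδ.1])]
    linarith [hδ.2]
  -- measurable representative
  set g : X → ℝ := hv.1.mk v with hgdef
  have hgm : Measurable g := hv.1.stronglyMeasurable_mk.measurable
  have hge : v =ᵐ[μ] g := hv.1.ae_eq_mk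
  have hgi : Integrable g μ := hv.congr hge
  have hIg : ∫ y, v y ∂μ = ∫ y, g y ∂μ := integral_congr_ae hge
  set m : ℝ := (∫ y, v y ∂μ) / A with hmdef
  have hm0 : 0 ≤ m := div_nonneg (integral_nonneg hv0) hμ.le
  have hmL : m ≤ L := by
    rw [hmdef, div_le_iff₀ hμ]
    calc ∫ y, v y ∂μ ≤ ∫ _, L ∂μ :=
          integral_mono hv (integrable_const L) hv1
      _ = L * A := by rw [integral_const]; simp [hAdef, mul_comm, Measure.real]
  have habs : Integrable (fun x => |g x - m|) μ := (hgi.sub (integrable_const m)).abs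
  have habsnn : (0:X → ℝ) ≤ᵐ[μ] fun x => |g x - m| := by
    filter_upwards with x using abs_nonneg _
  have hoscg : ∫ x, |g x - m| ∂μ ≤ C₀ * A := by
    have h1 : ∫ x, |v x - m| ∂μ = ∫ x, |g x - m| ∂μ :=
      integral_congr_ae (hge.mono fun x hx => by simp only [hx])
    rw [← h1]
    exact (div_le_iff₀ hμ).mp hosc
  -- measure equalities between v-sets and g-sets
  have hset0 : μ {x | v x = 0} = μ {x | g x = 0} := by
    apply measure_congr
    rw [Filter.eventuallyEq_set]
    filter_upwards [hge] with x hx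
    simp [Set.mem_setOf_eq, hx]
  have hsetL : μ {x | v x = L} = μ {x | g x = L} := by
    apply measure_congr
    rw [Filter.eventuallyEq_set]
    filter_upwards [hge] with x hx
    simp [Set.mem_setOf_eq, hx]
  have hS : MeasurableSet {x | g x = 0} := hgm (measurableSet_singleton 0)
  have hT : MeasurableSet {x | g x = L} := hgm (measurableSet_singleton L)
  have h6 : (1:ℝ) ≤ 6^N := one_le_pow₀ (by norm_num)
  have h6pos : (0:ℝ) < 6^N := by positivity
  set S0 : ℝ := (μ {x | g x = 0}).toReal with hS0def
  set TL : ℝ := (μ {x | g x = L}).toReal with hTLdef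
  have hS0nn : 0 ≤ S0 := ENNReal.toReal_nonneg
  have hTLnn : 0 ≤ TL := ENNReal.toReal_nonneg
  have hTLA : TL ≤ A := by
    rw [hTLdef, hAdef]
    exact ENNReal.toReal_mono (measure_ne_top μ _) (measure_mono (Set.subset_univ _))
  -- lower bound over zero set
  have hlow0 : m * S0 ≤ ∫ x, |g x - m| ∂μ := by
    have h1 : ∫ x in {x | g x = 0}, |g x - m| ∂μ = m * S0 := by
      rw [setIntegral_congr_fun hS (g := fun _ => m)
        (fun x hx => by simp [Set.mem_setOf_eq.mp hx, abs_of_nonneg hm0])]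
      rw [setIntegral_const]; simp [hS0def, mul_comm, Measure.real]
    rw [← h1]
    exact setIntegral_le_integral habs habsnn
  -- lower bound over max set
  have hlowL : (L - m) * TL ≤ ∫ x, |g x - m| ∂μ := by
    have h1 : ∫ x in {x | g x = L}, |g x - m| ∂μ = (L - m) * TL := by
      rw [setIntegral_congr_fun hT (g := fun _ => L - m)
        (fun x hx => by
          simp only [Set.mem_setOf_eq] at hx
          simp [hx, abs_of_nonneg (by linarith : (0:ℝ) ≤ L - m)])]
      rw [setIntegral_const]; simp [hTLdef, mul_comm, Measure.real]
    rw [← h1]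
    exact setIntegral_le_integral habs habsnn
  -- combine
  have hzero' : ν * A / 6^N ≤ S0 := by rw [hS0def, ← hset0]; exact hzero
  have hC₀ : 0 ≤ C₀ := by
    have h : 0 ≤ ∫ x, |g x - m| ∂μ := integral_nonneg fun x => abs_nonneg _
    nlinarith
  have hmbound : m * (ν * A / 6^N) ≤ C₀ * A :=
    le_trans (mul_le_mul_of_nonneg_left hzero' hm0) (le_trans hlow0 hoscg)
  have hm2 : m * ν ≤ C₀ * 6^N := by
    have h : m * (ν * A / 6^N) = m * ν * A / 6^N := by ring
    rw [h, div_le_iff₀ h6pos] at hmbound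
    have h2 : m * ν * A ≤ C₀ * 6^N * A := by linarith
    exact le_of_mul_le_mul_right h2 hμ
  have hLM : (L - m) * TL ≤ C₀ * A := le_trans hlowL hoscg
  have key : L * TL * ν ≤ 2*C₀*6^N * A := by
    have h1 : (L - m) * TL * ν ≤ C₀ * A * ν :=
      mul_le_mul_of_nonneg_right hLM hν.1.le
    have h2 : m * ν * TL ≤ C₀ * 6^N * TL := mul_le_mul_of_nonneg_right hm2 hTLnn
    have h3 : C₀ * 6^N * TL ≤ C₀ * 6^N * A :=
      mul_le_mul_of_nonneg_left hTLA (by positivity)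
    have h4 : C₀ * A * ν ≤ C₀ * A := by nlinarith [hν.2, mul_nonneg hC₀ hμ.le]
    have h5 : C₀ * A ≤ C₀ * 6^N * A := by nlinarith [mul_nonneg hC₀ hμ.le]
    have heq : L * TL * ν = (L - m) * TL * ν + m * ν * TL := by ring
    linarith
  rw [hsetL, ← hTLdef, div_le_div_iff₀ hμ (mul_pos hν.1 hL)]
  nlinarith [key]
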